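/- (Proposition 4) The network utility under symmetric threshold policies is strictly upper bounded: Σ_{s∈S} π_S(s)·U·G_s·(1−P_s)^{U−1} < Σ_{s∈S} π_S(s)·U·g(min{x*, β_s})·(1−min{x*, β_s})^{U−1}, where x* ∈ (0, 1/U) is the unique solution of g'(x)(1−x) = (U−1)g(x). -/

import Mathlib

open Set Finset Filter Topology

/-- Proposition 4: strict upper bound on the network utility under symmetric
threshold policies. -/
theorem network_utility_upper_bound
    (g g' : ℝ → ℝ)
    (hg_cont : ContinuousOn g (Icc 0 1))
    (hg_mono : StrictMonoOn g (Icc 0 1))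
    (hg_conc : StrictConcaveOn ℝ (Icc 0 1) g)
    (hg_deriv : ∀ x ∈ Ioo (0:ℝ) 1, HasDerivAt g (g' x) x)
    (hg'_cont : ContinuousOn g' (Ioo 0 1))
    (hg0 : g 0 = 0)
    (hg'0 : Tendsto g' (𝓝[>] (0:ℝ)) atTop)
    (hg'1 : Tendsto g' (𝓝[<] (1:ℝ)) (𝓝 0))
    (U : ℕ) (hU : 2 ≤ U)
    (S : Type*) [Fintype S] [Nonempty S]
    (πS : S → ℝ) (hπS_pos : ∀ s, 0 < πS s) (hπS_sum : ∑ s, πS s = 1)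
    (β : S → ℝ) (hβ : ∀ s, β s ∈ Ioo (0:ℝ) 1)
    (n : ℕ) (hn : 1 ≤ n)
    (π : S → ℕ → ℝ) (hπ_pos : ∀ s, ∀ e ≤ n, 0 < π s e)
    (hπ_sum : ∀ s, ∑ e ∈ range (n + 1), π s e = 1)
    (η : S → ℕ → ℝ) (hη0 : ∀ s, η s 0 = 0)
    (hη : ∀ s, ∀ e, 1 ≤ e → e ≤ n → η s e ∈ Ioc (0:ℝ) 1)
    (G P : S → ℝ)
    (hG : ∀ s, G s = ∑ e ∈ range (n + 1), π s e * g (η s e))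
    (hP : ∀ s, P s = ∑ e ∈ range (n + 1), π s e * η s e)
    (hPβ : ∀ s, P s ≤ β s)
    (xstar : ℝ) (hx_mem : xstar ∈ Ioo (0:ℝ) (1 / (U : ℝ)))
    (hx_eq : g' xstar * (1 - xstar) = ((U : ℝ) - 1) * g xstar) :
    ∑ s, πS s * ((U : ℝ) * G s * (1 - P s) ^ (U - 1)) <
      ∑ s, πS s * ((U : ℝ) * g (min xstar (β s)) *
        (1 - min xstar (β s)) ^ (U - 1)) := by
  have hU2 : (2:ℝ) ≤ (U:ℝ) := by exact_mod_cast hU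
  -- xstar ∈ (0,1)
  have hxs : xstar ∈ Ioo (0:ℝ) 1 := by
    refine ⟨hx_mem.1, lt_of_lt_of_le hx_mem.2 ?_⟩
    rw [div_le_one (by linarith)]; linarith
  -- strict concavity on the open interval
  have hconc' : StrictConcaveOn ℝ (Ioo (0:ℝ) 1) g :=
    hg_conc.subset Ioo_subset_Icc_self (convex_Ioo 0 1)
  -- g' is strictly antitone on (0,1)
  have hanti : StrictAntiOn g' (Ioo (0:ℝ) 1) := by
    have h := hconc'.strictAntiOn_deriv
      (fun x hx => (hg_deriv x hx).differentiableAt)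
    intro x hx y hy hxy
    have hx' := (hg_deriv x hx).deriv
    have hy' := (hg_deriv y hy).deriv
    rw [← hx', ← hy']; exact h hx hy hxy
  -- g' is nonnegative on (0,1)
  have hg'_nonneg : ∀ x ∈ Ioo (0:ℝ) 1, 0 ≤ g' x := by
    intro x hx
    refine le_of_tendsto hg'1 ?_
    filter_upwards [Ioo_mem_nhdsLT_of_mem (⟨hx.2, le_refl 1⟩ : (1:ℝ) ∈ Ioc x 1)]
      with y hy
    exact (hanti hx ⟨hx.1.trans hy.1, hy.2⟩ hy.1).le
  -- g' is positive on (0,1)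
  have hg'_pos : ∀ x ∈ Ioo (0:ℝ) 1, 0 < g' x := by
    intro x hx
    have hy : (x + 1) / 2 ∈ Ioo (0:ℝ) 1 := ⟨by linarith [hx.1, hx.2], by linarith [hx.2]⟩
    have h1 : g' ((x + 1) / 2) < g' x := hanti hx hy (by linarith [hx.2])
    exact lt_of_le_of_lt (hg'_nonneg _ hy) h1
  -- g is positive on (0,1]
  have hg_pos : ∀ x, 0 < x → x ≤ 1 → 0 < g x := by
    intro x h0 h1
    have := hg_mono (left_mem_Icc.2 zero_le_one) ⟨h0.le, h1⟩ h0
    rwa [hg0] at this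
  -- the auxiliary function h
  set hfun : ℝ → ℝ := fun x => g' x * (1 - x) - ((U:ℝ) - 1) * g x with hfun_def
  have hfun_anti : StrictAntiOn hfun (Ioo (0:ℝ) 1) := by
    intro x hx y hy hxy
    have h1 : g' y < g' x := hanti hx hy hxy
    have h2 : 0 ≤ g' y := hg'_nonneg y hy
    have h3 : g x < g y := hg_mono ⟨hx.1.le, hx.2.le⟩ ⟨hy.1.le, hy.2.le⟩ hxy
    simp only [hfun_def]
    nlinarith [hx.1, hx.2, hy.1, hy.2]
  have hfun_xstar : hfun xstar = 0 := by simp [hfun_def, hx_eq]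
  -- the function F
  set F : ℝ → ℝ := fun x => g x * (1 - x) ^ (U - 1) with hF_def
  obtain ⟨k, hk⟩ : ∃ k, U = k + 2 := ⟨U - 2, (Nat.sub_add_cancel hU).symm⟩
  have hU1k : U - 1 = k + 1 := by omega
  have hcastk : ((k:ℝ) + 1) = (U:ℝ) - 1 := by subst hk; push_cast; ring
  -- derivative of F on (0,1)
  have hFderiv : ∀ x ∈ Ioo (0:ℝ) 1, HasDerivAt F ((1 - x) ^ k * hfun x) x := by
    intro x hx
    have h1 : HasDerivAt (fun y : ℝ => 1 - y) (-1) x := by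
      simpa using (hasDerivAt_id x).const_sub 1
    have h2 : HasDerivAt (fun y : ℝ => (1 - y) ^ (k + 1))
        ((k + 1 : ℕ) * (1 - x) ^ k * (-1)) x := by
      simpa using h1.fun_pow (k + 1)
    have h3 := (hg_deriv x hx).fun_mul h2
    have h4 : F = fun y => g y * (1 - y) ^ (k + 1) := by
      funext y; rw [hF_def]; simp [hU1k]
    rw [h4]
    refine h3.congr_deriv ?_
    simp only [hfun_def]
    push_cast
    rw [← hcastk]
    ring
  -- continuity of F on [0,1]
  have hF_cont : ContinuousOn F (Icc (0:ℝ) 1) := by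
    exact hg_cont.mul ((continuous_const.sub continuous_id).pow (U - 1)).continuousOn
  -- F is monotone on [0, xstar]
  have hF_mono : MonotoneOn F (Icc (0:ℝ) xstar) := by
    have hsub : Icc (0:ℝ) xstar ⊆ Icc 0 1 := Icc_subset_Icc le_rfl hxs.2.le
    refine monotoneOn_of_deriv_nonneg (convex_Icc _ _) (hF_cont.mono hsub) ?_ ?_
    · rw [interior_Icc]
      intro x hx
      exact (hFderiv x ⟨hx.1, hx.2.trans hxs.2⟩).differentiableAt.differentiableWithinAt
    · rw [interior_Icc]
      intro x hx
      have hx01 : x ∈ Ioo (0:ℝ) 1 := ⟨hx.1, hx.2.trans hxs.2⟩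
      rw [(hFderiv x hx01).deriv]
      have h1 : 0 < hfun x := by
        rw [← hfun_xstar]; exact hfun_anti hx01 hxs hx.2
      have h0 : (0:ℝ) < 1 - x := by linarith [hx01.2]
      positivity
  -- F is antitone on [xstar, 1]
  have hF_anti : AntitoneOn F (Icc xstar 1) := by
    have hsub : Icc xstar 1 ⊆ Icc 0 1 := Icc_subset_Icc hxs.1.le le_rfl
    refine antitoneOn_of_deriv_nonpos (convex_Icc _ _) (hF_cont.mono hsub) ?_ ?_
    · rw [interior_Icc]
      intro x hx
      exact (hFderiv x ⟨hxs.1.trans hx.1, hx.2⟩).differentiableAt.differentiableWithinAt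
    · rw [interior_Icc]
      intro x hx
      have hx01 : x ∈ Ioo (0:ℝ) 1 := ⟨hxs.1.trans hx.1, hx.2⟩
      rw [(hFderiv x hx01).deriv]
      have h1 : hfun x < 0 := by
        rw [← hfun_xstar]; exact hfun_anti hxs hx01 hx.1
      have h0 : (0:ℝ) < 1 - x := by linarith [hx01.2]
      have h2 : (0:ℝ) < (1 - x) ^ k := by positivity
      nlinarith
  -- per-scenario strict inequality
  have key : ∀ s, (U:ℝ) * G s * (1 - P s) ^ (U - 1) <
      (U:ℝ) * g (min xstar (β s)) * (1 - min xstar (β s)) ^ (U - 1) := by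
    intro s
    have hβs := hβ s
    -- bounds on P s
    have hterm_nonneg : ∀ e ∈ range (n + 1), 0 ≤ π s e * η s e := by
      intro e he
      rw [Finset.mem_range] at he
      rcases Nat.eq_zero_or_pos e with rfl | hepos
      · simp [hη0 s]
      · exact mul_nonneg (hπ_pos s e (by omega)).le (hη s e hepos (by omega)).1.le
    have hPs_pos : 0 < P s := by
      rw [hP]
      refine Finset.sum_pos' hterm_nonneg ⟨1, Finset.mem_range.2 (by omega), ?_⟩
      exact mul_pos (hπ_pos s 1 hn) (hη s 1 le_rfl hn).1
    have hPs_lt1 : P s < 1 := lt_of_le_of_lt (hPβ s) hβs.2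
    -- Jensen (strict)
    have hjensen : G s < g (P s) := by
      have h := hg_conc.lt_map_sum (t := range (n + 1)) (w := π s) (p := η s)
        (fun e he => hπ_pos s e (by simpa [Nat.lt_succ_iff] using he))
        (hπ_sum s)
        (fun e he => by
          rw [Finset.mem_range, Nat.lt_succ_iff] at he
          rcases Nat.eq_zero_or_pos e with rfl | hepos
          · simp only [hη0 s]; exact left_mem_Icc.2 zero_le_one
          · exact Ioc_subset_Icc_self (hη s e hepos he))
        ⟨0, Finset.mem_range.2 (by omega), 1, Finset.mem_range.2 (by omega), by
          rw [hη0 s]; exact fun hcon => (hη s 1 le_rfl hn).1.ne hcon⟩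
      simp only [smul_eq_mul] at h
      rw [hG, hP]
      exact h
    -- F (P s) ≤ F m
    set m : ℝ := min xstar (β s) with hm_def
    have hm_pos : 0 < m := lt_min hxs.1 hβs.1
    have hm_lt1 : m < 1 := lt_of_le_of_lt (min_le_right _ _) hβs.2
    have hFP_le : F (P s) ≤ F m := by
      rcases le_or_gt (P s) m with hPm | hPm
      · exact hF_mono ⟨hPs_pos.le, hPm.trans (min_le_left _ _)⟩
          ⟨hm_pos.le, min_le_left _ _⟩ hPm
      · have hmx : m = xstar := by
          rcases min_cases xstar (β s) with ⟨h1, _⟩ | ⟨h1, h2⟩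
          · exact h1
          · exfalso; rw [hm_def, h1] at hPm; exact absurd (hPβ s) (not_le.2 hPm)
        rw [hmx]
        have hxP : xstar ≤ P s := by rw [hmx] at hPm; exact hPm.le
        exact hF_anti (left_mem_Icc.2 hxs.2.le) ⟨hxP, hPs_lt1.le⟩ hxP
    -- combine
    have hpow_pos : (0:ℝ) < (1 - P s) ^ (U - 1) := by
      have h0 : (0:ℝ) < 1 - P s := by linarith
      exact pow_pos h0 _
    have h1 : G s * (1 - P s) ^ (U - 1) < g (P s) * (1 - P s) ^ (U - 1) :=
      mul_lt_mul_of_pos_right hjensen hpow_pos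
    have h2 : g (P s) * (1 - P s) ^ (U - 1) ≤ g m * (1 - m) ^ (U - 1) := hFP_le
    have hUpos : (0:ℝ) < (U:ℝ) := by linarith
    calc (U:ℝ) * G s * (1 - P s) ^ (U - 1)
        = (U:ℝ) * (G s * (1 - P s) ^ (U - 1)) := by ring
      _ < (U:ℝ) * (g m * (1 - m) ^ (U - 1)) :=
          mul_lt_mul_of_pos_left (lt_of_lt_of_le h1 h2) hUpos
      _ = (U:ℝ) * g m * (1 - m) ^ (U - 1) := by ring
  refine Finset.sum_lt_sum_of_nonempty Finset.univ_nonempty ?_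
  intro s _
  exact mul_lt_mul_of_pos_left (key s) (hπS_pos s)
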